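/- Let A, B, C, E₁, E₂, F : ℝ⁵ → ℝ be functions, let γ be any map from ℝ⁵ to alternating 1-forms on ℝ⁵, and define the 2-form Ψ on ℝ⁵ (coordinates (x¹,x²,z,p₁,p₂)) by Ψ = A dp₁∧dp₂ + B dp₁∧dx² + C dx¹∧dp₂ + E₁ dp₁∧dx¹ + E₂ dp₂∧dx² + F dx¹∧dx² + θ∧γ. Then for every C² function u : ℝ² → ℝ and every x ∈ ℝ², the pullback of Ψ along j¹u at x equals [A(j¹u(x))(u₁₁u₂₂ − u₁₂²) + B(j¹u(x)) u₁₁ + C(j¹u(x)) u₂₂ + (E₂(j¹u(x)) − E₁(j¹u(x))) u₁₂ + F(j¹u(x))] dx¹∧dx², where u_{ij} = ∂²u/∂xⁱ∂xʲ(x). In particular (j¹u)*Ψ = 0 at x if and only if u satisfies the corresponding second-order Monge–Ampère equation at x. -/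

import Mathlib

/-!
Covectors at a point of `ℝ⁵` with coordinates `(x¹,x²,z,p₁,p₂)`
(indexed `0,1,2,3,4`): `dl 0 = dx¹`, `dl 1 = dx²`, `dl 2 = dz`, `dl 3 = dp₁`,
`dl 4 = dp₂`.  `wedgeF` is the wedge product of alternating forms.
-/

noncomputable section

abbrev V5 : Type := Fin 5 → ℝ

/-- The wedge product of real-valued alternating forms. -/
noncomputable def wedgeF {M : Type} [AddCommGroup M] [Module ℝ M] {a b : ℕ}
    (f : M [⋀^Fin a]→ₗ[ℝ] ℝ) (g : M [⋀^Fin b]→ₗ[ℝ] ℝ) :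
    M [⋀^Fin (a + b)]→ₗ[ℝ] ℝ :=
  ((TensorProduct.lid ℝ ℝ).toLinearMap.compAlternatingMap
    (f.domCoprod g)).domDomCongr finSumFinEquiv

/-- The coordinate covectors (as alternating 1-forms). -/
noncomputable def dl {n : ℕ} (i : Fin n) : (Fin n → ℝ) [⋀^Fin 1]→ₗ[ℝ] ℝ :=
  AlternatingMap.ofSubsingleton ℝ (Fin n → ℝ) ℝ 0 (LinearMap.proj i)

/-- The contact form `θ = dz − p₁dx¹ − p₂dx²` at the point `m ∈ ℝ⁵`. -/
noncomputable def θf (m : V5) : V5 [⋀^Fin 1]→ₗ[ℝ] ℝ :=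
  dl 2 - m 3 • dl 0 - m 4 • dl 1

/-- The 2-form
`Ψ = A dp₁∧dp₂ + B dp₁∧dx² + C dx¹∧dp₂ + E₁ dp₁∧dx¹ + E₂ dp₂∧dx² + F dx¹∧dx² + θ∧γ`
at the point `m ∈ ℝ⁵`, where `γ` is an arbitrary 1-form valued map. -/
noncomputable def Ψf (A B C E1 E2 F : V5 → ℝ) (γ : V5 → (V5 [⋀^Fin 1]→ₗ[ℝ] ℝ))
    (m : V5) : V5 [⋀^Fin 2]→ₗ[ℝ] ℝ :=
  A m • wedgeF (dl 3) (dl 4) + B m • wedgeF (dl 3) (dl 1) +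
  C m • wedgeF (dl 0) (dl 4) + E1 m • wedgeF (dl 3) (dl 0) +
  E2 m • wedgeF (dl 4) (dl 1) + F m • wedgeF (dl 0) (dl 1) +
  wedgeF (θf m) (γ m)

/-- The 1-jet prolongation `j¹u : ℝ² → ℝ⁵`,
`j¹u(x) = (x¹, x², u(x), ∂u/∂x¹(x), ∂u/∂x²(x))`. -/
noncomputable def j1 (u : (Fin 2 → ℝ) → ℝ) (y : Fin 2 → ℝ) : V5 :=
  ![y 0, y 1, u y,
    fderiv ℝ u y (Pi.single 0 1), fderiv ℝ u y (Pi.single 1 1)]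

open Equiv Sum in
lemma mk''_inj_aux (σ τ : Perm (Fin 1 ⊕ Fin 1))
    (h : (Quotient.mk'' σ : Perm.ModSumCongr (Fin 1) (Fin 1)) = Quotient.mk'' τ) :
    σ = τ := by
  obtain ⟨⟨sl, sr⟩, h⟩ := QuotientGroup.leftRel_apply.mp (Quotient.exact' h)
  have h0 : ((sl, sr) : Perm (Fin 1) × Perm (Fin 1)) = 1 := Subsingleton.elim _ _
  rw [h0, map_one] at h
  rw [eq_comm, inv_mul_eq_one] at h
  exact h

open Equiv Sum in
lemma perm_cases_aux (σ : Perm (Fin 1 ⊕ Fin 1)) :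
    σ = 1 ∨ σ = Equiv.swap (inl 0) (inr 0) := by
  revert σ; decide

open Equiv Sum in
lemma wedge11 {M : Type} [AddCommGroup M] [Module ℝ M]
    (f g : M [⋀^Fin 1]→ₗ[ℝ] ℝ) (v : Fin 2 → M) :
    wedgeF f g v = f ![v 0] * g ![v 1] - f ![v 1] * g ![v 0] := by
  rw [wedgeF]
  simp only [AlternatingMap.domDomCongr_apply, LinearMap.compAlternatingMap_apply,
    AlternatingMap.domCoprod_apply, MultilinearMap.sum_apply]
  haveI hdec : DecidableEq (Perm.ModSumCongr (Fin 1) (Fin 1)) := Classical.decEq _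
  have hne : (Quotient.mk'' 1 : Perm.ModSumCongr (Fin 1) (Fin 1)) ≠
      Quotient.mk'' (Equiv.swap (inl 0) (inr 0)) := by
    intro h
    exact absurd (mk''_inj_aux _ _ h) (by decide)
  have huniv : (Finset.univ : Finset (Perm.ModSumCongr (Fin 1) (Fin 1))) =
      {Quotient.mk'' 1, Quotient.mk'' (Equiv.swap (inl 0) (inr 0))} := by
    refine (Finset.eq_univ_iff_forall.2 fun x => ?_).symm
    refine Quotient.inductionOn' x fun σ => ?_
    rcases perm_cases_aux σ with h | h <;> subst h <;> simp [Quotient.mk'']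
  rw [huniv]
  erw [Finset.sum_pair hne]
  simp only [AlternatingMap.domCoprod.summand_mk'']
  have hs : Equiv.Perm.sign (Equiv.swap (Sum.inl (0:Fin 1)) (Sum.inr (0:Fin 1))) = -1 :=
    Equiv.Perm.sign_swap (by simp)
  simp only [Equiv.Perm.sign_one, hs, MultilinearMap.smul_apply,
    MultilinearMap.domDomCongr_apply, MultilinearMap.domCoprod_apply, one_smul,
    Units.neg_smul, map_add, map_neg, AlternatingMap.coe_multilinearMap, Function.comp]
  have e1 : (fun i : Fin 1 => v (finSumFinEquiv ((1 : Equiv.Perm (Fin 1 ⊕ Fin 1)) (Sum.inl i)))) = ![v 0] := by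
    funext i; fin_cases i; rfl
  have e2 : (fun i : Fin 1 => v (finSumFinEquiv ((1 : Equiv.Perm (Fin 1 ⊕ Fin 1)) (Sum.inr i)))) = ![v 1] := by
    funext i; fin_cases i; rfl
  have e3 : (fun i : Fin 1 => v (finSumFinEquiv ((Equiv.swap (Sum.inl 0) (Sum.inr 0) : Equiv.Perm (Fin 1 ⊕ Fin 1)) (Sum.inl i)))) = ![v 1] := by
    funext i; fin_cases i; rfl
  have e4 : (fun i : Fin 1 => v (finSumFinEquiv ((Equiv.swap (Sum.inl 0) (Sum.inr 0) : Equiv.Perm (Fin 1 ⊕ Fin 1)) (Sum.inr i)))) = ![v 0] := by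
    funext i; fin_cases i; rfl
  simp only [MultilinearMap.neg_apply, MultilinearMap.domDomCongr_apply,
    MultilinearMap.domCoprod_apply, AlternatingMap.coe_multilinearMap, Function.comp,
    e1, e2, e3, e4, map_neg, TensorProduct.lid_tmul, smul_eq_mul]
  simp [TensorProduct.lid_tmul, smul_eq_mul, sub_eq_add_neg]

lemma dl_apply {n : ℕ} (i : Fin n) (S : Fin n → ℝ) : dl i ![S] = S i := rfl

lemma j1_fderiv_apply (u : (Fin 2 → ℝ) → ℝ) (hu : ContDiff ℝ 2 u) (x s : Fin 2 → ℝ) :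
    fderiv ℝ (j1 u) x s = ![s 0, s 1, fderiv ℝ u x s,
      fderiv ℝ (fun y => fderiv ℝ u y (Pi.single 0 1)) x s,
      fderiv ℝ (fun y => fderiv ℝ u y (Pi.single 1 1)) x s] := by
  have hc : ContDiff ℝ 1 (fderiv ℝ u) := hu.fderiv_right (by norm_num)
  have hcd : DifferentiableAt ℝ (fderiv ℝ u) x := (hc.differentiable one_ne_zero) x
  have hgd : ∀ v : Fin 2 → ℝ, DifferentiableAt ℝ (fun y => fderiv ℝ u y v) x :=
    fun v => hcd.clm_apply (differentiableAt_const v)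
  have hL : HasFDerivAt (j1 u)
      (ContinuousLinearMap.pi ![ContinuousLinearMap.proj 0, ContinuousLinearMap.proj 1,
        fderiv ℝ u x,
        fderiv ℝ (fun y => fderiv ℝ u y (Pi.single 0 1)) x,
        fderiv ℝ (fun y => fderiv ℝ u y (Pi.single 1 1)) x]) x := by
    apply hasFDerivAt_pi''
    intro i
    fin_cases i
    · simpa [j1, ContinuousLinearMap.proj_pi] using
        (hasFDerivAt_apply (𝕜 := ℝ) (0 : Fin 2) x)
    · simpa [j1, ContinuousLinearMap.proj_pi] using
        (hasFDerivAt_apply (𝕜 := ℝ) (1 : Fin 2) x)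
    · simpa [j1, ContinuousLinearMap.proj_pi] using
        (hu.differentiable (by norm_num) x).hasFDerivAt
    · simpa [j1, ContinuousLinearMap.proj_pi] using
        ((hgd (Pi.single 0 1)).hasFDerivAt)
    · simpa [j1, ContinuousLinearMap.proj_pi] using
        ((hgd (Pi.single 1 1)).hasFDerivAt)
  rw [hL.fderiv]
  funext i
  fin_cases i <;> simp [ContinuousLinearMap.pi_apply]

/-- for a C² function `u : ℝ² → ℝ`, the pullback of `Ψ` along
`j¹u` at `x` equals
`[A(u₁₁u₂₂ − u₁₂²) + B u₁₁ + C u₂₂ + (E₂ − E₁)u₁₂ + F] dx¹∧dx²` (coefficients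
evaluated at `j¹u(x)`); in particular it vanishes iff `u` satisfies the
corresponding Monge–Ampère equation at `x`. -/
theorem stmt_15 (A B C E1 E2 F : V5 → ℝ) (γ : V5 → (V5 [⋀^Fin 1]→ₗ[ℝ] ℝ))
    (u : (Fin 2 → ℝ) → ℝ) (hu : ContDiff ℝ 2 u) (x : Fin 2 → ℝ)
    (u11 u12 u22 : ℝ)
    (h11 : u11 = fderiv ℝ (fun y => fderiv ℝ u y (Pi.single 0 1)) x (Pi.single 0 1))
    (h12 : u12 = fderiv ℝ (fun y => fderiv ℝ u y (Pi.single 1 1)) x (Pi.single 0 1))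
    (h22 : u22 = fderiv ℝ (fun y => fderiv ℝ u y (Pi.single 1 1)) x (Pi.single 1 1)) :
    (∀ s t : Fin 2 → ℝ,
      Ψf A B C E1 E2 F γ (j1 u x)
          ![fderiv ℝ (j1 u) x s, fderiv ℝ (j1 u) x t] =
        (A (j1 u x) * (u11 * u22 - u12 ^ 2) + B (j1 u x) * u11 +
            C (j1 u x) * u22 + (E2 (j1 u x) - E1 (j1 u x)) * u12 +
            F (j1 u x)) * (s 0 * t 1 - s 1 * t 0)) ∧
    ((∀ s t : Fin 2 → ℝ,
        Ψf A B C E1 E2 F γ (j1 u x)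
          ![fderiv ℝ (j1 u) x s, fderiv ℝ (j1 u) x t] = 0) ↔
      A (j1 u x) * (u11 * u22 - u12 ^ 2) + B (j1 u x) * u11 +
          C (j1 u x) * u22 + (E2 (j1 u x) - E1 (j1 u x)) * u12 +
          F (j1 u x) = 0) := by
  have hc : ContDiff ℝ 1 (fderiv ℝ u) := hu.fderiv_right (by norm_num)
  have hcd : DifferentiableAt ℝ (fderiv ℝ u) x := (hc.differentiable one_ne_zero) x
  have hgf : ∀ v s : Fin 2 → ℝ, fderiv ℝ (fun y => fderiv ℝ u y v) x s
      = fderiv ℝ (fderiv ℝ u) x s v := by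
    intro v s
    rw [fderiv_clm_apply hcd (differentiableAt_const v)]
    simp
  have hsymm : fderiv ℝ (fun y => fderiv ℝ u y (Pi.single 0 1)) x (Pi.single 1 1)
      = u12 := by
    rw [hgf, h12, hgf]
    exact ((hu.contDiffAt).isSymmSndFDerivAt (by norm_num)).eq _ _
  have hdec : ∀ (L : (Fin 2 → ℝ) →L[ℝ] ℝ) (s : Fin 2 → ℝ),
      L s = s 0 * L (Pi.single 0 1) + s 1 * L (Pi.single 1 1) := by
    intro L s
    have hs : s = s 0 • (Pi.single 0 1 : Fin 2 → ℝ) + s 1 • (Pi.single 1 1 : Fin 2 → ℝ) := by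
      funext i; fin_cases i <;> simp
    conv_lhs => rw [hs]
    simp [smul_eq_mul]
  have hm3 : j1 u x 3 = fderiv ℝ u x (Pi.single 0 1) := rfl
  have hm4 : j1 u x 4 = fderiv ℝ u x (Pi.single 1 1) := rfl
  have hθ : ∀ s : Fin 2 → ℝ, θf (j1 u x) ![fderiv ℝ (j1 u) x s] = 0 := by
    intro s
    rw [j1_fderiv_apply u hu x s]
    simp only [θf, AlternatingMap.sub_apply, AlternatingMap.smul_apply, dl_apply,
      Matrix.cons_val_zero, Matrix.cons_val_one, Matrix.head_cons, Matrix.cons_val_two,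
      Matrix.tail_cons, hm3, hm4, smul_eq_mul]
    rw [hdec (fderiv ℝ u x) s]
    ring
  have hmain : ∀ s t : Fin 2 → ℝ,
      Ψf A B C E1 E2 F γ (j1 u x)
          ![fderiv ℝ (j1 u) x s, fderiv ℝ (j1 u) x t] =
        (A (j1 u x) * (u11 * u22 - u12 ^ 2) + B (j1 u x) * u11 +
            C (j1 u x) * u22 + (E2 (j1 u x) - E1 (j1 u x)) * u12 +
            F (j1 u x)) * (s 0 * t 1 - s 1 * t 0) := by
    intro s t
    rw [Ψf]
    simp only [AlternatingMap.add_apply, AlternatingMap.smul_apply, smul_eq_mul, wedge11,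
      Matrix.cons_val_zero, Matrix.cons_val_one, Matrix.head_cons, hθ]
    rw [j1_fderiv_apply u hu x s, j1_fderiv_apply u hu x t]
    simp only [dl_apply, Matrix.cons_val_zero, Matrix.cons_val_one, Matrix.head_cons,
      Matrix.cons_val_two, Matrix.tail_cons, Matrix.cons_val_three, Matrix.cons_val_four]
    rw [hdec (fderiv ℝ (fun y => fderiv ℝ u y (Pi.single 0 1)) x) s,
        hdec (fderiv ℝ (fun y => fderiv ℝ u y (Pi.single 0 1)) x) t,
        hdec (fderiv ℝ (fun y => fderiv ℝ u y (Pi.single 1 1)) x) s,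
        hdec (fderiv ℝ (fun y => fderiv ℝ u y (Pi.single 1 1)) x) t,
        ← h11, ← h22, ← h12, hsymm]
    ring
  refine ⟨hmain, ?_, ?_⟩
  · intro h
    have := h (Pi.single 0 1) (Pi.single 1 1)
    rw [hmain] at this
    simpa using this
  · intro h s t
    rw [hmain, h, zero_mul]
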